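/- Let D be a triangulated category, E ⊆ D an admissible subcategory, and (G, F) an adjoint pair of exact endofunctors such that F acts on E as an equivalence and nilpotently on E^⊥. For a natural number a, the following are equivalent: (1) F^a(D) ⊆ E; (2) F^a(E^⊥) = 0; (3) the map Hom(F^a(d), d') → Hom(F^{a+1}(d), F(d')) induced by F is an isomorphism for all d, d' ∈ D. -/

import Mathlib

/-!
Let `D` be a triangulated category, `E ⊆ D` an admissible subcategory, and `(G, F)` an
adjoint pair of exact endofunctors such that `F` acts on `E` as an equivalence and
nilpotently on `E^⊥`.  For a natural number `a`, the following are equivalent: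
(1) `F^a(D) ⊆ E`; (2) `F^a(E^⊥) = 0`; (3) the map
`Hom(F^a d, d') → Hom(F^(a+1) d, F d')` induced by `F` is bijective for all `d, d'`.
-/

open CategoryTheory Limits CategoryTheory.Pretriangulated

namespace Stmt6

universe v u

variable {D : Type u} [Category.{v} D] [Preadditive D] [HasZeroObject D]
  [HasShift D ℤ] [∀ n : ℤ, (CategoryTheory.shiftFunctor D n).Additive] [Pretriangulated D]

/-- Iterated composition of an endofunctor. -/
def iter (F : D ⥤ D) : ℕ → D ⥤ D
  | 0 => 𝟭 D
  | n + 1 => iter F n ⋙ F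

/-- The right orthogonal of a class of objects. -/
def rOrth (P : D → Prop) : D → Prop := fun d => ∀ e : D, P e → ∀ f : e ⟶ d, f = 0

noncomputable instance iterCommShift (F : D ⥤ D) [F.CommShift ℤ] :
    ∀ n : ℕ, (iter F n).CommShift ℤ
  | 0 => inferInstanceAs ((𝟭 D).CommShift ℤ)
  | (n + 1) =>
      letI := iterCommShift F n
      inferInstanceAs ((iter F n ⋙ F).CommShift ℤ)

instance iterIsTriangulated (F : D ⥤ D) [F.CommShift ℤ] [F.IsTriangulated] :
    ∀ n : ℕ, (iter F n).IsTriangulated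
  | 0 => inferInstanceAs ((𝟭 D).IsTriangulated)
  | (n + 1) =>
      letI := iterIsTriangulated F n
      inferInstanceAs ((iter F n ⋙ F).IsTriangulated)

lemma iter_obj_comm (F : D ⥤ D) (n : ℕ) (d : D) :
    (iter F n).obj (F.obj d) = F.obj ((iter F n).obj d) := by
  induction n with
  | zero => rfl
  | succ n ih =>
      show F.obj ((iter F n).obj (F.obj d)) = F.obj (F.obj ((iter F n).obj d))
      rw [ih]

/-- Key exactness lemma: if `x ∈ E` and the third object of a distinguished triangle lies
in `E^⊥`, then composition with the first morphism is a bijection on maps from `x`. -/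
lemma bij_comp_mor₁ (P : D → Prop) (T : Triangle D) (hT : T ∈ distTriang D)
    (hc : rOrth P T.obj₃) (x : D) (hx : P x) (hx1 : P (x⟦(1 : ℤ)⟧)) :
    Function.Bijective (fun v : x ⟶ T.obj₁ => v ≫ T.mor₁) := by
  constructor
  · intro v₁ v₂ hv
    have hv' : v₁ ≫ T.mor₁ = v₂ ≫ T.mor₁ := hv
    have h0 : (v₁ - v₂) ≫ T.mor₁ = 0 := by
      rw [Preadditive.sub_comp, hv', sub_self]
    have h1 : (v₁ - v₂)⟦(1 : ℤ)⟧' ≫ T.mor₁⟦(1 : ℤ)⟧' = 0 := by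
      rw [← Functor.map_comp, h0, Functor.map_zero]
    obtain ⟨g, hg⟩ := Pretriangulated.Triangle.coyoneda_exact₁ T hT _ h1
    have hg0 : g = 0 := hc _ hx1 g
    have h2 : (v₁ - v₂)⟦(1 : ℤ)⟧' = 0 := by rw [hg, hg0, zero_comp]
    have h3 : v₁ - v₂ = 0 :=
      (shiftFunctor D (1 : ℤ)).map_injective (by rw [h2, Functor.map_zero])
    exact sub_eq_zero.1 h3
  · intro u
    obtain ⟨v, hvu⟩ :=
      Pretriangulated.Triangle.coyoneda_exact₂ T hT u (hc x hx (u ≫ T.mor₂))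
    exact ⟨v, hvu.symm⟩

/-- Existence of the approximation triangle `e → z → c` with `e ∈ E` and `c ∈ E^⊥`. -/
lemma exists_approx (P : D → Prop)
    (hP_shift : ∀ (X : D) (n : ℤ), P X → P (X⟦n⟧))
    (hadm : (ObjectProperty.ι P).IsLeftAdjoint) (z : D) :
    ∃ (e c : D) (f : e ⟶ z) (g : z ⟶ c) (h : c ⟶ e⟦(1 : ℤ)⟧),
      P e ∧ rOrth P c ∧ Triangle.mk f g h ∈ distTriang D := by
  haveI := hadm
  set ι := ObjectProperty.ι P with hι
  let adj := Adjunction.ofIsLeftAdjoint ι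
  set R := ι.rightAdjoint with hR
  let e : D := ι.obj (R.obj z)
  let f : e ⟶ z := adj.counit.app z
  have hbij : ∀ y : ObjectProperty.FullSubcategory P,
      Function.Bijective (fun v : ι.obj y ⟶ e => v ≫ f) := by
    intro y
    have heq : (fun v : ι.obj y ⟶ e => v ≫ f)
        = fun v : ι.obj y ⟶ e => (adj.homEquiv y z).symm (ObjectProperty.homMk v) := by
      funext v
      exact (adj.homEquiv_counit y z (ObjectProperty.homMk v)).symm
    rw [heq]
    exact (adj.homEquiv y z).symm.bijective.comp
      ⟨fun _ _ h => congrArg InducedCategory.Hom.hom h, ObjectProperty.homMk_surjective⟩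
  obtain ⟨c, g, h, hT⟩ := Pretriangulated.distinguished_cocone_triangle f
  refine ⟨e, c, f, g, h, (R.obj z).2, ?_, hT⟩
  intro e' he' u
  have hz31 : h ≫ f⟦(1 : ℤ)⟧' = 0 := comp_distTriang_mor_zero₃₁ _ hT
  have step1 : u ≫ h = 0 := by
    have α : (shiftFunctor D (1 : ℤ)).obj ((shiftFunctor D (-1 : ℤ)).obj e') ≅ e' :=
      (shiftEquiv D (1 : ℤ)).counitIso.app e'
    obtain ⟨w', hw'⟩ := (shiftFunctor D (1 : ℤ)).map_surjective (α.hom ≫ u ≫ h)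
    have hw0 : w' ≫ f = 0 := by
      apply (shiftFunctor D (1 : ℤ)).map_injective
      rw [Functor.map_comp, hw', Functor.map_zero, Category.assoc, Category.assoc,
        hz31, comp_zero, comp_zero]
    have hw'eq : w' ≫ f = (0 : (shiftFunctor D (-1 : ℤ)).obj e' ⟶ e) ≫ f := by
      rw [hw0, zero_comp]
    have hw'0 : w' = 0 := (hbij ⟨(shiftFunctor D (-1 : ℤ)).obj e',
      hP_shift e' (-1) he'⟩).1 hw'eq
    have h2 : α.hom ≫ u ≫ h = 0 := by
      rw [← hw', hw'0, Functor.map_zero]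
    calc u ≫ h = α.inv ≫ α.hom ≫ u ≫ h := by rw [Iso.inv_hom_id_assoc]
      _ = 0 := by rw [h2, comp_zero]
  obtain ⟨v, hv⟩ := Pretriangulated.Triangle.coyoneda_exact₃ _ hT u step1
  obtain ⟨v', hv'⟩ := (hbij ⟨e', he'⟩).2 v
  have hv'' : (v' : e' ⟶ e) ≫ f = v := hv'
  have hz12 : f ≫ g = 0 := comp_distTriang_mor_zero₁₂ _ hT
  have hv2 : u = v ≫ g := hv
  rw [hv2, ← hv'']
  exact (Category.assoc v' f g).trans (by rw [hz12, comp_zero])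

theorem power_conditions_equivalent
    (P : D → Prop)
    -- `E` is a thick subcategory:
    (hP_iso : ∀ {X Y : D}, (X ≅ Y) → P X → P Y)
    (hP_shift : ∀ (X : D) (n : ℤ), P X → P (X⟦n⟧))
    (hP_tri : ∀ T ∈ distTriang D, P T.obj₁ → P T.obj₂ → P T.obj₃)
    (hP_retract : ∀ (X Z : D), P Z → ∀ (i : X ⟶ Z) (r : Z ⟶ X), i ≫ r = 𝟙 X → P X)
    -- `E` is admissible:
    (_hadm_right : (ObjectProperty.ι P).IsLeftAdjoint)
    (_hadm_left : (ObjectProperty.ι P).IsRightAdjoint)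
    -- `(G, F)` an adjoint pair of exact endofunctors:
    (F G : D ⥤ D) [F.CommShift ℤ] [F.IsTriangulated] [G.CommShift ℤ] [G.IsTriangulated]
    (adj : G ⊣ F)
    -- `F` restricts to an autoequivalence of `E`:
    (hFP : ∀ d : D, P d → P (F.obj d))
    (hFE : (ObjectProperty.lift P (ObjectProperty.ι P ⋙ F)
      (fun X => hFP X.1 X.2)).IsEquivalence)
    -- `F` acts nilpotently on `E^⊥`:
    (hFperp : ∀ d : D, rOrth P d → rOrth P (F.obj d))
    (hnilp : ∃ b : ℕ, ∀ d : D, rOrth P d → IsZero ((iter F b).obj d))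
    (a : ℕ) :
    ((∀ d : D, P ((iter F a).obj d)) ↔
        (∀ d : D, rOrth P d → IsZero ((iter F a).obj d))) ∧
      ((∀ d : D, P ((iter F a).obj d)) ↔
        (∀ d d' : D, Function.Bijective
          (fun f : (iter F a).obj d ⟶ d' => F.map f))) := by
  classical
  -- membership in `E` is preserved by iterates of `F`
  have hPiter : ∀ (n : ℕ) (d : D), P d → P ((iter F n).obj d) := by
    intro n
    induction n with
    | zero => intro d hd; exact hd
    | succ n ih => intro d hd; exact hFP _ (ih d hd)
  -- membership in `E^⊥` is preserved by iterates of `F`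
  have hperpiter : ∀ (n : ℕ) (d : D), rOrth P d → rOrth P ((iter F n).obj d) := by
    intro n
    induction n with
    | zero => intro d hd; exact hd
    | succ n ih => intro d hd; exact hFperp _ (ih d hd)
  -- zero objects are preserved by iterates of `F`
  have hzeroiter : ∀ (n : ℕ) (d : D), IsZero d → IsZero ((iter F n).obj d) := by
    intro n
    induction n with
    | zero => intro d hd; exact hd
    | succ n ih => intro d hd; exact F.map_isZero (ih d hd)
  obtain ⟨b, hb⟩ := hnilp
  have happrox := exists_approx P hP_shift _hadm_right
  -- (1) → (2)
  have h12 : (∀ d : D, P ((iter F a).obj d)) →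
      (∀ d : D, rOrth P d → IsZero ((iter F a).obj d)) := by
    intro h1 d hd
    rw [IsZero.iff_id_eq_zero]
    exact hperpiter a d hd _ (h1 d) (𝟙 _)
  -- (2) → (1)
  have h21 : (∀ d : D, rOrth P d → IsZero ((iter F a).obj d)) →
      (∀ d : D, P ((iter F a).obj d)) := by
    intro h2 d
    obtain ⟨e, c, f, g, h, he, hc, hT⟩ := happrox d
    have hT' := (iter F a).map_distinguished _ hT
    have hz : IsZero (((iter F a).mapTriangle.obj (Triangle.mk f g h)).obj₃) := h2 c hc
    have hiso : IsIso ((iter F a).map f) :=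
      (Pretriangulated.Triangle.isZero₃_iff_isIso₁ _ hT').1 hz
    haveI := hiso
    exact hP_iso (asIso ((iter F a).map f)) (hPiter a e he)
  -- (1) → (3)
  have h13 : (∀ d : D, P ((iter F a).obj d)) →
      (∀ d d' : D, Function.Bijective
        (fun f : (iter F a).obj d ⟶ d' => F.map f)) := by
    intro h1 d d'
    have hx : P ((iter F a).obj d) := h1 d
    obtain ⟨e, c, f, g, h, he, hc, hT⟩ := happrox d'
    have β₁ : Function.Bijective (fun v : (iter F a).obj d ⟶ e => v ≫ f) :=
      bij_comp_mor₁ P (Triangle.mk f g h) hT hc _ hx (hP_shift _ 1 hx)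
    have hTF := F.map_distinguished _ hT
    have hcF : rOrth P ((F.mapTriangle.obj (Triangle.mk f g h)).obj₃) := hFperp c hc
    have β₂ : Function.Bijective
        (fun w : F.obj ((iter F a).obj d) ⟶ F.obj e => w ≫ F.map f) :=
      bij_comp_mor₁ P (F.mapTriangle.obj (Triangle.mk f g h)) hTF hcF
        (F.obj ((iter F a).obj d)) (hFP _ hx) (hP_shift _ 1 (hFP _ hx))
    -- fully faithfulness of `F` on `E`
    have γ : Function.Bijective (fun v : (iter F a).obj d ⟶ e => F.map v) := by
      let L := ObjectProperty.lift P (ObjectProperty.ι P ⋙ F)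
        (fun X => hFP X.1 X.2)
      haveI : L.IsEquivalence := hFE
      constructor
      · intro v₁ v₂ hv
        have hv' : L.map (X := ⟨(iter F a).obj d, hx⟩) (Y := ⟨e, he⟩) (ObjectProperty.homMk v₁) =
            L.map (X := ⟨(iter F a).obj d, hx⟩) (Y := ⟨e, he⟩) (ObjectProperty.homMk v₂) :=
            congrArg ObjectProperty.homMk hv
        exact congrArg InducedCategory.Hom.hom (L.map_injective hv')
      · intro w
        obtain ⟨v, hv⟩ := L.map_surjective (X := ⟨(iter F a).obj d, hx⟩)
          (Y := ⟨e, he⟩) (show L.obj ⟨(iter F a).obj d, hx⟩ ⟶ L.obj ⟨e, he⟩ from ObjectProperty.homMk w)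
        have hv2 : L.map v = ObjectProperty.homMk w := hv
        exact ⟨v.hom, by have := congrArg InducedCategory.Hom.hom hv2; exact this⟩
    have hcomp : ((fun u : (iter F a).obj d ⟶ d' => F.map u) ∘
        (fun v : (iter F a).obj d ⟶ e => v ≫ f)) =
        ((fun w : F.obj ((iter F a).obj d) ⟶ F.obj e => w ≫ F.map f) ∘
        (fun v : (iter F a).obj d ⟶ e => F.map v)) := by
      funext v
      exact F.map_comp v f
    have hbij : Function.Bijective ((fun u : (iter F a).obj d ⟶ d' => F.map u) ∘
        (fun v : (iter F a).obj d ⟶ e => v ≫ f)) := by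
      rw [hcomp]
      exact β₂.comp γ
    exact (Function.Bijective.of_comp_iff _ β₁).1 hbij
  -- (3) → (2)
  have h32 : (∀ d d' : D, Function.Bijective
      (fun f : (iter F a).obj d ⟶ d' => F.map f)) →
      (∀ d : D, rOrth P d → IsZero ((iter F a).obj d)) := by
    intro h3 d hd
    have key : ∀ k : ℕ,
        (∀ y : D, ∀ f g : (iter F a).obj ((iter F k).obj d) ⟶ y, f = g) →
        (∀ y : D, ∀ f g : (iter F a).obj d ⟶ y, f = g) := by
      intro k
      induction k with
      | zero => intro h; exact h
      | succ k ih =>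
        intro h
        apply ih
        intro y f g
        have e1 : (iter F a).obj ((iter F (k + 1)).obj d)
            = F.obj ((iter F a).obj ((iter F k).obj d)) :=
          iter_obj_comm F a ((iter F k).obj d)
        have h' := h (F.obj y)
        rw [e1] at h'
        exact (h3 ((iter F k).obj d) y).1 (h' (F.map f) (F.map g))
    have base : ∀ y : D, ∀ f g : (iter F a).obj ((iter F b).obj d) ⟶ y, f = g := by
      intro y f g
      exact (hzeroiter a _ (hb d hd)).eq_of_src f g
    rw [IsZero.iff_id_eq_zero]
    exact key b base _ (𝟙 _) 0
  exact ⟨⟨h12, h21⟩, ⟨h13, fun h3 => h21 (h32 h3)⟩⟩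

end Stmt6
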